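/- Let A ∈ ℝ^{n×n}, let H ∈ ℝ^{n×n} be symmetric positive definite with Aᵀ H + H A negative definite, and let V ∈ ℝ^{n×r} have full column rank r. Then Vᵀ H V is symmetric positive definite (hence invertible), and the matrix Â := (Vᵀ H V)⁻¹ Vᵀ H A V is Hurwitz, i.e., every eigenvalue of Â (viewed as a complex matrix) has negative real part. -/

import Mathlib

open Matrix
open scoped ComplexOrder

private lemma ofReal_dot {r : ℕ} (S : Matrix (Fin r) (Fin r) ℝ) (a c : Fin r → ℝ) :
    (fun i => (a i : ℂ)) ⬝ᵥ ((S.map (Complex.ofReal ·)) *ᵥ fun i => (c i : ℂ)) =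
      ((a ⬝ᵥ S *ᵥ c : ℝ) : ℂ) := by
  have h1 : (S.map (Complex.ofReal ·)) *ᵥ (fun i => (c i : ℂ)) =
      fun i => ((S *ᵥ c) i : ℂ) := by
    funext i
    exact (RingHom.map_mulVec Complex.ofRealHom S c i).symm
  rw [h1]
  have := RingHom.map_dotProduct Complex.ofRealHom a (S *ᵥ c)
  exact this.symm

private lemma dot_symm {r : ℕ} (S : Matrix (Fin r) (Fin r) ℝ) (hS : Sᵀ = S)
    (a b : Fin r → ℝ) : a ⬝ᵥ S *ᵥ b = b ⬝ᵥ S *ᵥ a := by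
  rw [dotProduct_mulVec a S b]
  conv_lhs => rw [← hS, vecMul_transpose]
  exact dotProduct_comm _ _

private lemma isSymm_of_herm {m : Type*} {M : Matrix m m ℝ} (h : M.IsHermitian) :
    Mᵀ = M := by
  ext i j
  have := congrFun (congrFun h i) j
  simpa using this

private lemma dot_transpose_map {r : ℕ} (D : Matrix (Fin r) (Fin r) ℝ) (z : Fin r → ℂ) :
    star z ⬝ᵥ (Dᵀ.map (Complex.ofReal ·)) *ᵥ z =
      star (star z ⬝ᵥ (D.map (Complex.ofReal ·)) *ᵥ z) := by
  have h1 : (Dᵀ.map (Complex.ofReal ·)) = (D.map (Complex.ofReal ·))ᴴ := by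
    ext i j
    simp [conjTranspose_apply, Complex.conj_ofReal]
  rw [h1, dotProduct_mulVec, ← star_mulVec]
  exact star_dotProduct _ _

private lemma map_posDef {r : ℕ} {S : Matrix (Fin r) (Fin r) ℝ} (hS : S.PosDef) :
    (S.map (Complex.ofReal ·)).PosDef := by
  have hsymm : Sᵀ = S := isSymm_of_herm hS.1
  rw [posDef_iff_dotProduct_mulVec]
  constructor
  · ext i j
    simp only [conjTranspose_apply, map_apply, RCLike.star_def, Complex.conj_ofReal]
    exact_mod_cast congrFun (congrFun hsymm i) j
  · intro x hx
    set u : Fin r → ℂ := fun i => ((x i).re : ℂ) with hu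
    set v : Fin r → ℂ := fun i => ((x i).im : ℂ) with hv
    set a : Fin r → ℝ := fun i => (x i).re with ha
    set b : Fin r → ℝ := fun i => (x i).im with hb
    have hxuv : x = u + Complex.I • v := by
      funext i
      simp [hu, hv, Complex.ext_iff]
    have hsx : star x = u - Complex.I • v := by
      funext i
      simp [hu, hv, Pi.star_apply, Complex.ext_iff]
    have habs : a ⬝ᵥ S *ᵥ b = b ⬝ᵥ S *ᵥ a := dot_symm S hsymm a b
    have key : star x ⬝ᵥ (S.map (Complex.ofReal ·)) *ᵥ x =
        ((a ⬝ᵥ S *ᵥ a + b ⬝ᵥ S *ᵥ b : ℝ) : ℂ) := by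
      conv_lhs => rw [hsx, hxuv]
      rw [mulVec_add, mulVec_smul, dotProduct_add, sub_dotProduct, sub_dotProduct,
        smul_dotProduct, smul_dotProduct, dotProduct_smul, dotProduct_smul]
      have e1 : u ⬝ᵥ (S.map (Complex.ofReal ·)) *ᵥ u = ((a ⬝ᵥ S *ᵥ a : ℝ) : ℂ) :=
        ofReal_dot S a a
      have e2 : u ⬝ᵥ (S.map (Complex.ofReal ·)) *ᵥ v = ((a ⬝ᵥ S *ᵥ b : ℝ) : ℂ) :=
        ofReal_dot S a b
      have e3 : v ⬝ᵥ (S.map (Complex.ofReal ·)) *ᵥ u = ((b ⬝ᵥ S *ᵥ a : ℝ) : ℂ) :=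
        ofReal_dot S b a
      have e4 : v ⬝ᵥ (S.map (Complex.ofReal ·)) *ᵥ v = ((b ⬝ᵥ S *ᵥ b : ℝ) : ℂ) :=
        ofReal_dot S b b
      rw [e1, e2, e3, e4, habs]
      simp only [smul_eq_mul]
      ring_nf
      rw [Complex.I_sq]
      push_cast
      ring
    rw [key, Complex.zero_lt_real]
    have hab : a ≠ 0 ∨ b ≠ 0 := by
      by_contra h
      push_neg at h
      apply hx
      funext i
      exact Complex.ext (by simpa [ha] using congrFun h.1 i)
        (by simpa [hb] using congrFun h.2 i)
    have hsa : star a = a := funext fun i => rfl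
    have hsb : star b = b := funext fun i => rfl
    have h1 : 0 ≤ a ⬝ᵥ S *ᵥ a := by simpa [hsa] using hS.posSemidef.dotProduct_mulVec_nonneg a
    have h2 : 0 ≤ b ⬝ᵥ S *ᵥ b := by simpa [hsb] using hS.posSemidef.dotProduct_mulVec_nonneg b
    rcases hab with h | h
    · have h3 : 0 < a ⬝ᵥ S *ᵥ a := by simpa [hsa] using hS.dotProduct_mulVec_pos h
      linarith
    · have h3 : 0 < b ⬝ᵥ S *ᵥ b := by simpa [hsb] using hS.dotProduct_mulVec_pos h
      linarith

/-- If `H` is symmetric positive definite with `Aᵀ H + H A` negative definite and `V` has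
full column rank `r`, then `Vᵀ H V` is symmetric positive definite (hence invertible) and
the reduced matrix `Â = (Vᵀ H V)⁻¹ Vᵀ H A V` is Hurwitz. -/
theorem projected_matrix_hurwitz {n r : ℕ}
    (A : Matrix (Fin n) (Fin n) ℝ)
    (H : Matrix (Fin n) (Fin n) ℝ) (hHsymm : H.IsSymm) (hHpos : H.PosDef)
    (hneg : (-(Aᵀ * H + H * A)).PosDef)
    (V : Matrix (Fin n) (Fin r) ℝ) (hV : V.rank = r) :
    (Vᵀ * H * V).IsSymm ∧ (Vᵀ * H * V).PosDef ∧ IsUnit (Vᵀ * H * V) ∧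
    ∀ μ ∈ spectrum ℂ
      (((Vᵀ * H * V)⁻¹ * Vᵀ * H * A * V).map (Complex.ofReal ·)), μ.re < 0 := by
  classical
  -- V has trivial kernel
  have hVinj : ∀ x : Fin r → ℝ, V *ᵥ x = 0 → x = 0 := by
    intro x hx0
    have hrn := LinearMap.finrank_range_add_finrank_ker V.mulVecLin
    have hfin : Module.finrank ℝ (Fin r → ℝ) = r := by simp
    rw [hfin] at hrn
    have hrank : Module.finrank ℝ (LinearMap.range V.mulVecLin) = r := hV
    have hker0 : Module.finrank ℝ (LinearMap.ker V.mulVecLin) = 0 := by omega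
    have hkerbot : LinearMap.ker V.mulVecLin = ⊥ := Submodule.finrank_eq_zero.mp hker0
    have hmem : x ∈ LinearMap.ker V.mulVecLin := by
      simpa [Matrix.mulVecLin_apply] using hx0
    simpa [hkerbot] using hmem
  -- congruence preserves positive definiteness
  have congrPD : ∀ (S : Matrix (Fin n) (Fin n) ℝ), S.PosDef → (Vᵀ * S * V).PosDef := by
    intro S hS
    have hS' : Sᵀ = S := isSymm_of_herm hS.1
    rw [posDef_iff_dotProduct_mulVec]
    constructor
    · show (Vᵀ * S * V)ᴴ = Vᵀ * S * V
      have : (Vᵀ * S * V)ᴴ = (Vᵀ * S * V)ᵀ := by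
        ext i j; simp [conjTranspose_apply]
      rw [this, transpose_mul, transpose_mul, transpose_transpose, hS', Matrix.mul_assoc]
    · intro x hx0
      have hVx : V *ᵥ x ≠ 0 := fun h => hx0 (hVinj x h)
      have h := hS.dotProduct_mulVec_pos hVx
      have hmv : (Vᵀ * S * V) *ᵥ x = Vᵀ *ᵥ (S *ᵥ (V *ᵥ x)) := by
        rw [← mulVec_mulVec, ← mulVec_mulVec]
      have hsx : star x = x := funext fun i => rfl
      have hsVx : star (V *ᵥ x) = V *ᵥ x := funext fun i => rfl
      rw [hmv, dotProduct_mulVec, hsx, vecMul_transpose]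
      exact h
  have hBpd : (Vᵀ * H * V).PosDef := congrPD H hHpos
  have hBsymm : (Vᵀ * H * V).IsSymm := isSymm_of_herm hBpd.1
  have hBunit : IsUnit (Vᵀ * H * V) := hBpd.isUnit
  refine ⟨hBsymm, hBpd, hBunit, ?_⟩
  intro μ hμ
  set Ah := (Vᵀ * H * V)⁻¹ * Vᵀ * H * A * V with hAh
  set M := Ah.map (Complex.ofReal ·) with hM
  -- obtain eigenvector
  rw [← AlgEquiv.spectrum_eq (Matrix.toLinAlgEquiv' :
    Matrix (Fin r) (Fin r) ℂ ≃ₐ[ℂ] _) M,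
    ← Module.End.hasEigenvalue_iff_mem_spectrum] at hμ
  obtain ⟨z, hz⟩ := hμ.exists_hasEigenvector
  have hzne : z ≠ 0 := hz.2
  have hzeq : M *ᵥ z = μ • z := by
    have := hz.apply_eq_smul
    simpa [Matrix.toLinAlgEquiv'_apply] using this
  -- B * Ah = Vᵀ H A V
  have hdet : IsUnit (Vᵀ * H * V).det := (Matrix.isUnit_iff_isUnit_det _).mp hBunit
  have hBA : (Vᵀ * H * V) * Ah = Vᵀ * H * A * V := by
    rw [hAh]
    simp only [← Matrix.mul_assoc]
    rw [Matrix.mul_nonsing_inv _ hdet, Matrix.one_mul]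
  set Bc := (Vᵀ * H * V).map (Complex.ofReal ·) with hBc
  set Cc := (Vᵀ * H * A * V).map (Complex.ofReal ·) with hCc
  have hCcBM : Cc = Bc * M := by
    rw [hCc, hBc, hM, ← hBA]
    exact Matrix.map_mul (f := Complex.ofRealHom)
  have hCz : Cc *ᵥ z = μ • (Bc *ᵥ z) := by
    rw [hCcBM, ← mulVec_mulVec, hzeq, mulVec_smul]
  -- the quadratic forms
  set q : ℂ := star z ⬝ᵥ Bc *ᵥ z with hq
  have hqpos : 0 < q := (map_posDef hBpd).dotProduct_mulVec_pos hzne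
  have hqre : 0 < q.re := (Complex.lt_def.mp hqpos).1
  have hqim : q.im = 0 := ((Complex.lt_def.mp hqpos).2).symm
  have hDz : star z ⬝ᵥ Cc *ᵥ z = μ * q := by
    rw [hCz, dotProduct_smul, smul_eq_mul, hq]
  -- the Lyapunov matrix
  have hPpd : (Vᵀ * (-(Aᵀ * H + H * A)) * V).PosDef := congrPD _ hneg
  have hPcpd := map_posDef hPpd
  have hppos : 0 < star z ⬝ᵥ ((Vᵀ * (-(Aᵀ * H + H * A)) * V).map (Complex.ofReal ·)) *ᵥ z :=
    hPcpd.dotProduct_mulVec_pos hzne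
  have hP : Vᵀ * (-(Aᵀ * H + H * A)) * V = -((Vᵀ * H * A * V)ᵀ + (Vᵀ * H * A * V)) := by
    have hDT : (Vᵀ * H * A * V)ᵀ = Vᵀ * Aᵀ * H * V := by
      have hH : Hᵀ = H := hHsymm
      simp [transpose_mul, transpose_transpose, hH, Matrix.mul_assoc]
    rw [hDT]
    simp only [Matrix.mul_neg, Matrix.neg_mul, Matrix.mul_add, Matrix.add_mul,
      Matrix.mul_assoc]
  have hPz : star z ⬝ᵥ ((Vᵀ * (-(Aᵀ * H + H * A)) * V).map (Complex.ofReal ·)) *ᵥ z =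
      -(star (μ * q) + μ * q) := by
    have hmapP : (Vᵀ * (-(Aᵀ * H + H * A)) * V).map (Complex.ofReal ·) =
        -(((Vᵀ * H * A * V)ᵀ).map (Complex.ofReal ·) + Cc) := by
      rw [hP, hCc]
      ext i j
      simp
    rw [hmapP, neg_mulVec, add_mulVec, dotProduct_neg, dotProduct_add,
      dot_transpose_map, hDz]
  rw [hPz] at hppos
  have hre := (Complex.lt_def.mp hppos).1
  have hmq : (μ * q).re = μ.re * q.re := by
    rw [Complex.mul_re, hqim]
    ring
  simp only [Complex.neg_re, Complex.add_re, Complex.zero_re] at hre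
  rw [show (star (μ * q)).re = (μ * q).re from Complex.conj_re _] at hre
  rw [hmq] at hre
  nlinarith
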